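/- There is a surjective homomorphism from the group G(Q) of the once-punctured annulus quiver onto the affine Weyl group of type D̃_4: the assignment t_1 ↦ s_1, t_2 ↦ s_2, t_3 ↦ s_3, t_4 ↦ s_3s_2s_4s_2s_3, t_5 ↦ s_4s_2s_5s_2s_4 respects all defining relations of G(Q). -/

import Mathlib

namespace PuncturedAnnulus

/-- Generators of the free group on five letters `t₁, …, t₅` (indexed `0, …, 4`). -/
def x (i : Fin 5) : FreeGroup (Fin 5) := FreeGroup.of i

/-- Defining relators of the group `G(Q)` of the once-punctured annulus quiver:
`tᵢ²`; `(t₁t₂)³, (t₁t₄)³, (t₁t₅)³, (t₂t₃)³, (t₃t₄)³, (t₃t₅)³`;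
`(t₁t₃)², (t₂t₄)², (t₂t₅)², (t₄t₅)²`; and the cycle relation `(t₁t₂t₃t₄t₃t₂)²`. -/
def GQrels : Set (FreeGroup (Fin 5)) :=
  { (x 0) ^ 2, (x 1) ^ 2, (x 2) ^ 2, (x 3) ^ 2, (x 4) ^ 2,
    (x 0 * x 1) ^ 3, (x 0 * x 3) ^ 3, (x 0 * x 4) ^ 3,
    (x 1 * x 2) ^ 3, (x 2 * x 3) ^ 3, (x 2 * x 4) ^ 3,
    (x 0 * x 2) ^ 2, (x 1 * x 3) ^ 2, (x 1 * x 4) ^ 2, (x 3 * x 4) ^ 2,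
    (x 0 * x 1 * x 2 * x 3 * x 2 * x 1) ^ 2 }

/-- Defining relators of the affine Weyl group of type `D̃₄`: generators
`s₁, …, s₅` (indexed `0, …, 4`) with `s₂` (index `1`) the central node. -/
def Wrels : Set (FreeGroup (Fin 5)) :=
  { (x 0) ^ 2, (x 1) ^ 2, (x 2) ^ 2, (x 3) ^ 2, (x 4) ^ 2,
    (x 1 * x 0) ^ 3, (x 1 * x 2) ^ 3, (x 1 * x 3) ^ 3, (x 1 * x 4) ^ 3,
    (x 0 * x 2) ^ 2, (x 0 * x 3) ^ 2, (x 0 * x 4) ^ 2,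
    (x 2 * x 3) ^ 2, (x 2 * x 4) ^ 2, (x 3 * x 4) ^ 2 }

/-- The group `G(Q)` of the once-punctured annulus with one marked point on each
boundary component. -/
def GQ : Type := PresentedGroup GQrels

/-- The affine Weyl group of type `D̃₄`. -/
def W : Type := PresentedGroup Wrels

instance : Group GQ := by unfold GQ; infer_instance
instance : Group W := by unfold W; infer_instance

/-- The generator `tᵢ` of `G(Q)`. -/
def t (i : Fin 5) : GQ := PresentedGroup.of i

/-- The simple reflection `sᵢ` of the affine Weyl group of type `D̃₄`. -/
def s (i : Fin 5) : W := PresentedGroup.of i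

section Aux
variable {G : Type*} [Group G]

lemma sq_rule {a : G} (h : a * a = 1) : ∀ g : G, a * (a * g) = g := fun g => by
  rw [← mul_assoc, h, one_mul]

lemma comm_rule {a b : G} (ha : a * a = 1) (hb : b * b = 1) (h : (a * b) ^ 2 = 1) :
    ∀ g : G, a * (b * g) = b * (a * g) := by
  have hh : (a * b) * (a * b) = 1 := by rw [← sq]; exact h
  have h2 : (a * b) * (b * a) = 1 := by
    have e : (a * b) * (b * a) = a * (b * (b * a)) := by simp only [mul_assoc]
    rw [e, sq_rule hb, ha]
  have key : a * b = b * a := mul_left_cancel (hh.trans h2.symm)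
  intro g
  rw [← mul_assoc, key, mul_assoc]

lemma braid_rule {a b : G} (ha : a * a = 1) (hb : b * b = 1) (h : (b * a) ^ 3 = 1) :
    ∀ g : G, b * (a * (b * g)) = a * (b * (a * g)) := by
  have e1 : (b * a * b) * (a * b * a) = 1 := by
    have e : (b * a * b) * (a * b * a) = (b * a) ^ 3 := by
      rw [pow_succ, pow_succ, pow_one]; simp only [mul_assoc]
    rw [e, h]
  have e2 : (a * b * a) * (a * b * a) = 1 := by
    have e : (a * b * a) * (a * b * a) = a * (b * (a * (a * (b * a)))) := by
      simp only [mul_assoc]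
    rw [e, sq_rule ha, sq_rule hb, ha]
  have key : b * a * b = a * b * a :=
    (eq_inv_of_mul_eq_one_left e1).trans (inv_eq_of_mul_eq_one_right e2)
  intro g
  have l1 : b * (a * (b * g)) = (b * a * b) * g := by simp only [mul_assoc]
  have l2 : (a * b * a) * g = a * (b * (a * g)) := by simp only [mul_assoc]
  rw [l1, key, l2]

end Aux

/-- The image of each generator of `G(Q)` in the affine Weyl group. -/
def f5 : Fin 5 → W
  | 0 => s 0
  | 1 => s 1
  | 2 => s 2
  | 3 => s 2 * s 1 * s 3 * s 1 * s 2
  | 4 => s 3 * s 1 * s 4 * s 1 * s 3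

set_option maxHeartbeats 2000000 in
/-- There is a surjective homomorphism from the group `G(Q)` of the once-punctured
annulus quiver onto the affine Weyl group of type `D̃₄`, sending
`t₁ ↦ s₁`, `t₂ ↦ s₂`, `t₃ ↦ s₃`, `t₄ ↦ s₃s₂s₄s₂s₃`, `t₅ ↦ s₄s₂s₅s₂s₄`. -/
theorem exists_surjective_hom_onto_affine_D4 :
    ∃ φ : GQ →* W, Function.Surjective φ ∧
      φ (t 0) = s 0 ∧ φ (t 1) = s 1 ∧ φ (t 2) = s 2 ∧
      φ (t 3) = s 2 * s 1 * s 3 * s 1 * s 2 ∧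
      φ (t 4) = s 3 * s 1 * s 4 * s 1 * s 3 := by
  -- the defining relations of `W`
  have hmk : ∀ r ∈ Wrels, (PresentedGroup.mk Wrels) r = 1 := fun r hr =>
    (QuotientGroup.eq_one_iff r).mpr (Subgroup.subset_normalClosure hr)
  have hx : ∀ i : Fin 5, PresentedGroup.mk Wrels (x i) = s i := fun i => rfl
  have sq0 : s 0 * s 0 = 1 := by
    have h := hmk ((x 0) ^ 2) (by simp [Wrels]); rw [map_pow, hx] at h; rw [← sq]; exact h
  have sq1 : s 1 * s 1 = 1 := by
    have h := hmk ((x 1) ^ 2) (by simp [Wrels]); rw [map_pow, hx] at h; rw [← sq]; exact h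
  have sq2 : s 2 * s 2 = 1 := by
    have h := hmk ((x 2) ^ 2) (by simp [Wrels]); rw [map_pow, hx] at h; rw [← sq]; exact h
  have sq3 : s 3 * s 3 = 1 := by
    have h := hmk ((x 3) ^ 2) (by simp [Wrels]); rw [map_pow, hx] at h; rw [← sq]; exact h
  have sq4 : s 4 * s 4 = 1 := by
    have h := hmk ((x 4) ^ 2) (by simp [Wrels]); rw [map_pow, hx] at h; rw [← sq]; exact h
  have hb10 : (s 1 * s 0) ^ 3 = 1 := by
    have h := hmk ((x 1 * x 0) ^ 3) (by simp [Wrels]); rwa [map_pow, map_mul, hx, hx] at h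
  have hb12 : (s 1 * s 2) ^ 3 = 1 := by
    have h := hmk ((x 1 * x 2) ^ 3) (by simp [Wrels]); rwa [map_pow, map_mul, hx, hx] at h
  have hb13 : (s 1 * s 3) ^ 3 = 1 := by
    have h := hmk ((x 1 * x 3) ^ 3) (by simp [Wrels]); rwa [map_pow, map_mul, hx, hx] at h
  have hb14 : (s 1 * s 4) ^ 3 = 1 := by
    have h := hmk ((x 1 * x 4) ^ 3) (by simp [Wrels]); rwa [map_pow, map_mul, hx, hx] at h
  have hc02 : (s 0 * s 2) ^ 2 = 1 := by
    have h := hmk ((x 0 * x 2) ^ 2) (by simp [Wrels]); rwa [map_pow, map_mul, hx, hx] at h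
  have hc03 : (s 0 * s 3) ^ 2 = 1 := by
    have h := hmk ((x 0 * x 3) ^ 2) (by simp [Wrels]); rwa [map_pow, map_mul, hx, hx] at h
  have hc04 : (s 0 * s 4) ^ 2 = 1 := by
    have h := hmk ((x 0 * x 4) ^ 2) (by simp [Wrels]); rwa [map_pow, map_mul, hx, hx] at h
  have hc23 : (s 2 * s 3) ^ 2 = 1 := by
    have h := hmk ((x 2 * x 3) ^ 2) (by simp [Wrels]); rwa [map_pow, map_mul, hx, hx] at h
  have hc24 : (s 2 * s 4) ^ 2 = 1 := by
    have h := hmk ((x 2 * x 4) ^ 2) (by simp [Wrels]); rwa [map_pow, map_mul, hx, hx] at h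
  have hc34 : (s 3 * s 4) ^ 2 = 1 := by
    have h := hmk ((x 3 * x 4) ^ 2) (by simp [Wrels]); rwa [map_pow, map_mul, hx, hx] at h
  -- rewriting rules
  have sq0' := sq_rule sq0
  have sq1' := sq_rule sq1
  have sq2' := sq_rule sq2
  have sq3' := sq_rule sq3
  have sq4' := sq_rule sq4
  have br10' := braid_rule sq0 sq1 hb10
  have br12' := braid_rule sq2 sq1 hb12
  have br13' := braid_rule sq3 sq1 hb13
  have br14' := braid_rule sq4 sq1 hb14
  have c02' := comm_rule sq0 sq2 hc02
  have c03' := comm_rule sq0 sq3 hc03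
  have c04' := comm_rule sq0 sq4 hc04
  have c23' := comm_rule sq2 sq3 hc23
  have c24' := comm_rule sq2 sq4 hc24
  have c34' := comm_rule sq3 sq4 hc34
  have c23 : s 2 * s 3 = s 3 * s 2 := by have h := c23' 1; simpa using h
  -- derived rules
  have D1' : ∀ g : W, s 0 * (s 1 * (s 3 * (s 1 * g))) = s 3 * (s 0 * (s 1 * (s 3 * g))) :=
    fun g => by rw [br13', c03']
  have D2' : ∀ g : W, s 0 * (s 1 * (s 4 * (s 1 * g))) = s 4 * (s 0 * (s 1 * (s 4 * g))) :=
    fun g => by rw [br14', c04']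
  have D3' : ∀ g : W, s 2 * (s 1 * (s 4 * (s 1 * g))) = s 4 * (s 2 * (s 1 * (s 4 * g))) :=
    fun g => by rw [br14', c24']
  -- the relators of `G(Q)` are killed
  have hrels : ∀ r ∈ GQrels, FreeGroup.lift f5 r = 1 := by
    have hf : ∀ i, FreeGroup.lift f5 (x i) = f5 i := fun i => FreeGroup.lift_apply_of
    intro r hr
    simp only [GQrels, Set.mem_insert_iff, Set.mem_singleton_iff] at hr
    rcases hr with rfl | rfl | rfl | rfl | rfl | rfl | rfl | rfl | rfl | rfl | rfl | rfl |
      rfl | rfl | rfl | rfl <;>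
      simp only [map_pow, map_mul, hf, f5] <;>
      simp only [pow_succ, pow_zero, one_mul, mul_assoc]
    · rw [sq0]
    · rw [sq1]
    · rw [sq2]
    · rw [sq2', sq1', sq3', sq1', sq2]
    · rw [sq3', sq1', sq4', sq1', sq3]
    · rw [br10', sq0', sq0', sq1]
    · rw [c02', c02', c02', sq2', sq2', D1', D1', sq3', D1', sq3', br10', sq0', sq0',
        sq1', sq3', sq2]
    · rw [c03', c03', c03', sq3', sq3', D2', D2', sq4', D2', sq4', br10', sq0', sq0',
        sq1', sq4', sq3]
    · rw [br12', sq2', sq1', sq2]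
    · rw [sq2', sq2', sq2', br13', ← c23', br13', ← c23', br13', ← c23, sq3', sq3', br12',
        sq2', sq1', sq2', sq3]
    · rw [c23', c23', c23', sq3', sq3', D3', D3', sq4', D3', sq4', br12', sq2', sq2',
        sq1', sq4', sq3]
    · rw [c02', sq0', sq2]
    · rw [← br12', sq1', sq1', ← c23', sq3', br12', sq2', sq1', sq2]
    · rw [← br13', sq1', sq1', ← c34', sq4', br13', sq3', sq1', sq3]
    · rw [← c23', c23', ← br13', sq1', ← br13', sq1', br12', br12', c24', sq2', c23', sq2',
        c23', sq2', sq3', sq1', sq4', sq1', sq3]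
    · rw [sq2', sq1', sq2', sq1', sq2', sq1', sq2', sq1, mul_one, c03', sq0', sq3]
  -- the homomorphism
  refine ⟨PresentedGroup.toGroup hrels, ?_, ?_, ?_, ?_, ?_, ?_⟩
  · -- surjectivity
    have hφ : ∀ i, PresentedGroup.toGroup hrels (t i) = f5 i := fun i =>
      PresentedGroup.toGroup.of hrels
    have h0 : s 0 ∈ (PresentedGroup.toGroup hrels).range := ⟨t 0, hφ 0⟩
    have h1 : s 1 ∈ (PresentedGroup.toGroup hrels).range := ⟨t 1, hφ 1⟩
    have h2 : s 2 ∈ (PresentedGroup.toGroup hrels).range := ⟨t 2, hφ 2⟩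
    have hD : (s 2 * s 1 * s 3 * s 1 * s 2) ∈ (PresentedGroup.toGroup hrels).range :=
      ⟨t 3, hφ 3⟩
    have hE : (s 3 * s 1 * s 4 * s 1 * s 3) ∈ (PresentedGroup.toGroup hrels).range :=
      ⟨t 4, hφ 4⟩
    have e3 : s 3 = s 1 * s 2 * (s 2 * s 1 * s 3 * s 1 * s 2) * s 2 * s 1 := by
      symm
      have e : s 1 * s 2 * (s 2 * s 1 * s 3 * s 1 * s 2) * s 2 * s 1 =
          s 1 * (s 2 * (s 2 * (s 1 * (s 3 * (s 1 * (s 2 * (s 2 * s 1))))))) := by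
        simp only [mul_assoc]
      rw [e, sq2', sq1', sq2', sq1, mul_one]
    have h3 : s 3 ∈ (PresentedGroup.toGroup hrels).range := by
      rw [e3]
      exact mul_mem (mul_mem (mul_mem (mul_mem h1 h2) hD) h2) h1
    have e4 : s 4 = s 1 * s 3 * (s 3 * s 1 * s 4 * s 1 * s 3) * s 3 * s 1 := by
      symm
      have e : s 1 * s 3 * (s 3 * s 1 * s 4 * s 1 * s 3) * s 3 * s 1 =
          s 1 * (s 3 * (s 3 * (s 1 * (s 4 * (s 1 * (s 3 * (s 3 * s 1))))))) := by
        simp only [mul_assoc]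
      rw [e, sq3', sq1', sq3', sq1, mul_one]
    have h4 : s 4 ∈ (PresentedGroup.toGroup hrels).range := by
      rw [e4]
      exact mul_mem (mul_mem (mul_mem (mul_mem h1 h3) hE) h3) h1
    have hall : ∀ i : Fin 5, s i ∈ (PresentedGroup.toGroup hrels).range := by
      intro i
      fin_cases i
      exacts [h0, h1, h2, h3, h4]
    have htop : (PresentedGroup.toGroup hrels).range = ⊤ := by
      rw [eq_top_iff]
      refine le_trans (le_of_eq (PresentedGroup.closure_range_of Wrels).symm) ?_
      refine (Subgroup.closure_le (G := W) _).mpr ?_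
      rintro w ⟨i, rfl⟩
      exact hall i
    exact MonoidHom.range_eq_top.mp htop
  · exact PresentedGroup.toGroup.of hrels
  · exact PresentedGroup.toGroup.of hrels
  · exact PresentedGroup.toGroup.of hrels
  · exact PresentedGroup.toGroup.of hrels
  · exact PresentedGroup.toGroup.of hrels

end PuncturedAnnulus
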